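/- Under the assumptions of the self-consistency equation, the real part of m satisfies Re(m)/Re(z) = ((d−1)/d · Y − X)/(1 − Y + X) whenever Re(z) ≠ 0, and consequently Re(m)/Re(z) ≥ −1/2. -/

import Mathlib

/-- `Y` from the singularity analysis of the self-consistency equation. -/
noncomputable def Ysc (d : ℕ) (z w m : ℂ) : ℝ :=
  ((d : ℝ) / ((d : ℝ) - 1)) * ‖w‖ ^ 2 * ‖m‖ ^ 2
    / ‖z + ((d : ℂ) / ((d : ℂ) - 1)) * m‖ ^ 2

/-- Under the self-consistency equation,
`Re(m)/Re(z) = ((d-1)/d·Y − X)/(1 − Y + X)` and consequently `Re(m)/Re(z) ≥ −1/2`. -/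
theorem self_consistency_real_part (d : ℕ) (hd : 3 ≤ d) (z w m : ℂ)
    (hz : 0 < z.im) (hzre : z.re ≠ 0) (hm : 0 < m.im)
    (hne : z + ((d : ℂ) / ((d : ℂ) - 1)) * m ≠ 0)
    (heq : m * ((‖w‖ : ℂ) ^ 2 - (z + ((d : ℂ) / ((d : ℂ) - 1)) * m) * (z + m))
      = z + ((d : ℂ) / ((d : ℂ) - 1)) * m)
    (hX : ‖m‖ ^ 2 ≤ 1) (hY : Ysc d z w m ≤ 1)
    (hden : 0 < 1 - Ysc d z w m + ‖m‖ ^ 2) :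
    m.re / z.re
      = (((d : ℝ) - 1) / (d : ℝ) * Ysc d z w m - ‖m‖ ^ 2)
          / (1 - Ysc d z w m + ‖m‖ ^ 2)
    ∧ -(1 / 2) ≤ m.re / z.re := by
  have hd3 : (3:ℝ) ≤ (d:ℝ) := by exact_mod_cast hd
  have hd1 : (1:ℝ) < (d:ℝ) := by linarith
  have hdne : ((d:ℝ) - 1) ≠ 0 := by linarith
  have hdpos : (0:ℝ) < (d:ℝ) := by linarith
  set c : ℝ := (d:ℝ) / ((d:ℝ) - 1) with hc
  have hcpos : 0 < c := div_pos hdpos (by linarith)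
  have hcC : ((d:ℂ)) / ((d:ℂ) - 1) = (c : ℂ) := by
    rw [hc]; push_cast; ring
  rw [hcC] at hne heq
  set S : ℂ := z + (c:ℂ) * m with hS
  set X : ℝ := ‖m‖ ^ 2 with hX2
  set S2 : ℝ := ‖S‖ ^ 2 with hS2
  have hS2pos : 0 < S2 := by
    rw [hS2]; exact pow_pos (norm_pos_iff.mpr hne) 2
  have hmXC : (X:ℂ) = m * (starRingEnd ℂ) m := by
    rw [Complex.mul_conj, hX2, Complex.sq_norm]
  have hS2C : (S2:ℂ) = S * (starRingEnd ℂ) S := by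
    rw [Complex.mul_conj, hS2, Complex.sq_norm]
  have key : ((‖w‖ ^ 2 : ℝ) : ℂ) * (X:ℂ) * (starRingEnd ℂ) S
      = (S2:ℂ) * ((X:ℂ) * (z + m) + (starRingEnd ℂ) m) := by
    rw [hmXC, hS2C]
    push_cast
    linear_combination ((starRingEnd ℂ) m * (starRingEnd ℂ) S) * heq
  have hSre : S.re = z.re + c * m.re := by
    rw [hS]; simp [Complex.add_re, Complex.mul_re]
  have E1 : (‖w‖ ^ 2) * X * S.re = S2 * (X * (z.re + m.re) + m.re) := by
    have h := congrArg Complex.re key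
    simp [Complex.mul_re, Complex.mul_im, Complex.add_re, Complex.add_im, sq] at h
    linear_combination h
  have hYeq : Ysc d z w m * S2 = c * (‖w‖ ^ 2) * X := by
    rw [Ysc, hcC, ← hS, ← hX2, ← hc, ← hS2]
    field_simp
  set Y : ℝ := Ysc d z w m with hYv
  have hY0 : 0 ≤ Y := by
    rw [hYv, Ysc]; positivity
  set k : ℝ := ((d:ℝ) - 1) / (d:ℝ) with hk
  have hkc : k * c = 1 := by
    rw [hk, hc]; field_simp
  have hk2 : (1:ℝ)/2 ≤ k := by
    rw [hk, le_div_iff₀ hdpos]; linarith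
  have hne2 : c * S2 ≠ 0 := by positivity
  have H : c * S2 * (m.re * (1 - Y + X)) = c * S2 * (z.re * (k * Y - X)) := by
    rw [hSre] at E1
    linear_combination (-c) * E1 - (z.re + c * m.re) * hYeq - (z.re * Y * S2) * hkc
  have hmain : m.re * (1 - Y + X) = z.re * (k * Y - X) := mul_left_cancel₀ hne2 H
  have goal1 : m.re / z.re = (k * Y - X) / (1 - Y + X) := by
    rw [div_eq_div_iff hzre hden.ne']
    linear_combination hmain
  refine ⟨goal1, ?_⟩
  rw [goal1, le_div_iff₀ hden]
  nlinarith [mul_nonneg hY0 (by linarith : (0:ℝ) ≤ 2*k - 1)]
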